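/- Let R be a commutative ring with a derivation δ, let g be an invertible n×n matrix and h an invertible m×m matrix over R, and let g⊗h denote their Kronecker product (an invertible nm×nm matrix). For an invertible matrix a, write P(a) = [[a, δa],[0, a]] (block matrix, δ entrywise). Let Q be the 4nm×4nm block matrix (blocks of size nm×nm, rows and columns indexed by the pairs (1,1),(1,∂),(∂,1),(∂,∂) in this order) given by Q = [[g⊗h, g⊗δh, δg⊗h, δg⊗δh],[0, g⊗h, 0, δg⊗h],[0, 0, g⊗h, g⊗δh],[0, 0, 0, g⊗h]] (i.e., Q is the Kronecker product P(g)⊗P(h) under the lexicographic identification of indices), and let T be the 4nm×2nm block matrix [[I,0],[0,I],[0,I],[0,0]] with I the nm×nm identity. Then Q·T = T·P(g⊗h). -/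

import Mathlib

open Kronecker

/-- The first prolongation `P(a) = [[a, δa],[0, a]]` of a square matrix. -/
def prolong {R : Type*} [CommRing R] {ι : Type*} (δ : R → R) (a : Matrix ι ι R) :
    Matrix (ι ⊕ ι) (ι ⊕ ι) R :=
  Matrix.fromBlocks a (a.map δ) 0 a

/-- The matrix `T = [[I,0],[0,I],[0,I],[0,0]]` of the product-rule morphism
`(V ⊗ W)⁽¹⁾ → V⁽¹⁾ ⊗ W⁽¹⁾`, `1⊗(v⊗w) ↦ (1⊗v)⊗(1⊗w)`,
`∂⊗(v⊗w) ↦ (∂⊗v)⊗(1⊗w) + (1⊗v)⊗(∂⊗w)`. -/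
def prodRuleT {R : Type*} [CommRing R] {n m : ℕ} :
    Matrix ((Fin n ⊕ Fin n) × (Fin m ⊕ Fin m)) ((Fin n × Fin m) ⊕ (Fin n × Fin m)) R :=
  fun p q =>
    match p, q with
    | (Sum.inl i, Sum.inl j), Sum.inl (i', j') => if i = i' ∧ j = j' then 1 else 0
    | (Sum.inl i, Sum.inr j), Sum.inr (i', j') => if i = i' ∧ j = j' then 1 else 0
    | (Sum.inr i, Sum.inl j), Sum.inr (i', j') => if i = i' ∧ j = j' then 1 else 0
    | _, _ => 0

/-- for a derivation `δ` on a commutative ring `R` and invertible matrices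
`g` (`n × n`) and `h` (`m × m`), the Kronecker product `Q = P(g) ⊗ P(h)` of the
prolongations and the product-rule matrix `T` satisfy `Q · T = T · P(g ⊗ h)`. -/
theorem stmt_11 {R : Type*} [CommRing R] {n m : ℕ}
    (δ : R → R)
    (hδ_add : ∀ a b : R, δ (a + b) = δ a + δ b)
    (hδ_leibniz : ∀ a b : R, δ (a * b) = δ a * b + a * δ b)
    (g : Matrix (Fin n) (Fin n) R) (h : Matrix (Fin m) (Fin m) R)
    (hg : IsUnit g) (hh : IsUnit h)
    (Q : Matrix ((Fin n ⊕ Fin n) × (Fin m ⊕ Fin m)) ((Fin n ⊕ Fin n) × (Fin m ⊕ Fin m)) R)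
    (hQ : Q = prolong δ g ⊗ₖ prolong δ h) :
    Q * (prodRuleT : Matrix _ _ R) = prodRuleT * prolong δ (g ⊗ₖ h) := by
  subst hQ
  show @HMul.hMul _ _ _ Matrix.instHMulOfFintypeOfMulOfAddCommMonoid _ _ =
    @HMul.hMul _ _ _ Matrix.instHMulOfFintypeOfMulOfAddCommMonoid _ _
  ext ⟨a, b⟩ q
  rcases q with ⟨i', j'⟩ | ⟨i', j'⟩ <;> rcases a with i | i <;> rcases b with j | j <;>
    simp [Matrix.mul_apply, prodRuleT, prolong, Matrix.kroneckerMap_apply, Matrix.fromBlocks,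
      Fintype.sum_prod_type, Fintype.sum_sum_type, Finset.mul_sum, Finset.sum_ite_eq,
      hδ_leibniz, Matrix.map_apply, mul_comm, mul_ite, ite_and] <;> ring
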